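/- arXiv:2601.19691 — 4 statements merged into one kernel-verified Lean document; each statement's English description precedes it below -/
import Mathlib

section
/- For every element $x = w t_\lambda$ of the extended affine Weyl group $\widetilde{W} = W \ltimes \Lambda$ and every $u \in W$, one has $\ell(x) - \ell_P(u) + \ell_P(wu) + \langle 2\rho_P, u^{-1}(\lambda) \rangle \ge 0$. -/
/-!
Setting: a finite reduced crystallographic root system `R` with positive roots `Rpos`
in a rational vector space `E`, a parabolic subset `RP = R_P`, elements `w, u` of the
Weyl group (linear automorphisms preserving `R`), and an integral coweight `lam`
(a linear functional taking integer values on roots).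

`affLen Rpos w lam` is the Iwahori–Matsumoto length
`ℓ(w t_λ) = ∑_{α ∈ R⁺} |⟨α, λ⟩ + χ(w(α) ∈ R⁻)|`, where `β ∈ R⁻` is encoded by `-β ∈ R⁺`.

`lenP Rpos RP u` is `ℓ_P(u) = #{α ∈ R⁺ \ R_P⁺ : u(α) ∈ R⁻}`, and
`⟨2ρ_P, u⁻¹(λ)⟩ = ∑_{α ∈ R⁺ \ R_P⁺} ⟨u(α), λ⟩`.
-/

open Finset

/-- The Iwahori–Matsumoto length of the element `w t_λ` of the extended affine Weyl group:
`ℓ(w t_λ) = ∑_{α ∈ R⁺} |⟨α, λ⟩ + χ(w(α) ∈ R⁻)|`. -/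
noncomputable def affLen {E : Type*} [AddCommGroup E] [Module ℚ E] [DecidableEq E]
    (Rpos : Finset E) (w : E ≃ₗ[ℚ] E) (lam : E →ₗ[ℚ] ℚ) : ℚ :=
  ∑ α ∈ Rpos, |lam α + (if -(w α) ∈ Rpos then 1 else 0)|

/-- `ℓ_P(u) = #{α ∈ R⁺ \ R_P⁺ : u(α) ∈ R⁻}`, the length of the minimal length
representative of `u W_P`. -/
def lenP {E : Type*} [AddCommGroup E] [Module ℚ E] [DecidableEq E]
    (Rpos RP : Finset E) (u : E ≃ₗ[ℚ] E) : ℕ :=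
  ((Rpos \ RP).filter fun α => -(u α) ∈ Rpos).card

/-- For every `x = w t_λ ∈ 𝑊̃ = W ⋉ Λ` and every `u ∈ W`,
`ℓ(x) - ℓ_P(u) + ℓ_P(wu) + ⟨2ρ_P, u⁻¹(λ)⟩ ≥ 0`. -/
theorem stmt0 {E : Type*} [AddCommGroup E] [Module ℚ E] [DecidableEq E]
    (R Rpos RP : Finset E)
    (hspan : Submodule.span ℚ (R : Set E) = ⊤)
    (hsplit : ∀ α : E, α ∈ R ↔ (α ∈ Rpos ∨ -α ∈ Rpos))
    (hdisj : ∀ α ∈ Rpos, -α ∉ Rpos)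
    (hRP : RP ⊆ R) (hRPneg : ∀ α ∈ RP, -α ∈ RP)
    (w u : E ≃ₗ[ℚ] E)
    (hw : ∀ α ∈ R, w α ∈ R) (hu : ∀ α ∈ R, u α ∈ R)
    (lam : E →ₗ[ℚ] ℚ)
    (hlam : ∀ α ∈ R, ∃ n : ℤ, lam α = (n : ℚ)) :
    0 ≤ affLen Rpos w lam - (lenP Rpos RP u : ℚ) + (lenP Rpos RP (u.trans w) : ℚ)
        + ∑ α ∈ Rpos \ RP, lam (u α) := by
  classical
  set s : Finset E := Rpos \ RP with hs
  have hRposR : ∀ α ∈ Rpos, α ∈ R := fun α h => (hsplit α).2 (Or.inl h)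
  set t : E → ℚ := fun β => |lam β + (if -(w β) ∈ Rpos then 1 else 0)| with ht
  set f : E → E := fun α => if -(u α) ∈ Rpos then -(u α) else u α with hf
  have hfmem : ∀ α ∈ s, f α ∈ Rpos := by
    intro α hα
    have hαR : α ∈ R := hRposR α (mem_sdiff.mp hα).1
    have huα : u α ∈ R := hu α hαR
    by_cases h : -(u α) ∈ Rpos
    · simp [hf, h]
    · rcases (hsplit (u α)).1 huα with h' | h'
      · simp [hf, h, h']
      · exact absurd h' h
  have hinj : Set.InjOn f ↑s := by
    intro a ha b hb hab
    simp only [hs, Finset.coe_sdiff, Set.mem_diff, Finset.mem_coe] at ha hb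
    have ha' : a ∈ Rpos := ha.1
    have hb' : b ∈ Rpos := hb.1
    simp only [hf] at hab
    split_ifs at hab with h1 h2 h2
    · exact u.injective (neg_injective hab)
    · exfalso
      have hab' : u a = u (-b) := by rw [map_neg, ← hab, neg_neg]
      have : a = -b := u.injective hab'
      exact hdisj b hb' (this ▸ ha')
    · exfalso
      have hab' : u a = u (-b) := by rw [map_neg, ← neg_neg (u a), hab, neg_neg]
      have : a = -b := u.injective hab'
      exact hdisj b hb' (this ▸ ha')
    · exact u.injective hab
  set c : E → ℚ := fun α => lam (u α) + (if -(w (u α)) ∈ Rpos then 1 else 0)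
      - (if -(u α) ∈ Rpos then 1 else 0) with hc
  have hpt : ∀ α ∈ s, 0 ≤ c α + t (f α) := by
    intro α hα
    have hαR : α ∈ R := hRposR α (mem_sdiff.mp hα).1
    have huα : u α ∈ R := hu α hαR
    have hwuα : w (u α) ∈ R := hw _ huα
    simp only [hc, hf, ht]
    by_cases h1 : -(u α) ∈ Rpos
    · simp only [h1, if_true, map_neg, neg_neg]
      by_cases h2 : w (u α) ∈ Rpos
      · have h3 : ¬(-(w (u α)) ∈ Rpos) := hdisj _ h2
        simp only [h2, h3, if_true, if_false, map_neg]
        cases abs_cases (-(lam (u α)) + 1) with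
        | inl h => linarith [h.1]
        | inr h => linarith [h.1]
      · have h3 : -(w (u α)) ∈ Rpos := by
          rcases (hsplit _).1 hwuα with h' | h'
          · exact absurd h' h2
          · exact h'
        simp only [h2, h3, if_true, if_false, map_neg]
        cases abs_cases (-(lam (u α)) + 0) with
        | inl h => linarith [h.1]
        | inr h => linarith [h.1]
    · simp only [h1, if_false]
      cases abs_cases (lam (u α) + (if -(w (u α)) ∈ Rpos then (1:ℚ) else 0)) with
      | inl h => linarith [h.1, h.2]
      | inr h => linarith [h.1, h.2]
  have hsum : ∑ α ∈ s, t (f α) ≤ ∑ β ∈ Rpos, t β := by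
    calc ∑ α ∈ s, t (f α) = ∑ β ∈ s.image f, t β :=
          (Finset.sum_image (fun x hx y hy hxy => hinj hx hy hxy)).symm
      _ ≤ ∑ β ∈ Rpos, t β := by
          apply Finset.sum_le_sum_of_subset_of_nonneg
          · intro β hβ
            rcases Finset.mem_image.mp hβ with ⟨a, ha, rfl⟩
            exact hfmem a ha
          · intro β _ _
            exact abs_nonneg _
  have hkey : 0 ≤ ∑ α ∈ s, c α + ∑ α ∈ s, t (f α) := by
    rw [← Finset.sum_add_distrib]
    exact Finset.sum_nonneg hpt
  have h1 : (lenP Rpos RP u : ℚ) = ∑ α ∈ s, (if -(u α) ∈ Rpos then (1:ℚ) else 0) := by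
    rw [lenP, Finset.card_filter]
    push_cast
    rfl
  have h2 : (lenP Rpos RP (u.trans w) : ℚ)
      = ∑ α ∈ s, (if -(w (u α)) ∈ Rpos then (1:ℚ) else 0) := by
    rw [lenP, Finset.card_filter]
    push_cast
    rfl
  have hc' : ∑ α ∈ s, c α = ∑ α ∈ s, lam (u α)
      + ∑ α ∈ s, (if -(w (u α)) ∈ Rpos then (1:ℚ) else 0)
      - ∑ α ∈ s, (if -(u α) ∈ Rpos then (1:ℚ) else 0) := by
    rw [hc, ← Finset.sum_add_distrib, ← Finset.sum_sub_distrib]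
  rw [affLen, h1, h2]
  have : ∑ α ∈ Rpos, |lam α + (if -(w α) ∈ Rpos then (1:ℚ) else 0)| = ∑ β ∈ Rpos, t β := rfl
  rw [this]
  linarith [hkey, hsum, hc']
end

section
/- For an element $x = w t_\lambda$ of the extended affine Weyl group $\widetilde{W} = W \ltimes \Lambda$ and $u \in W$, the equality $\ell(x) - \ell_P(u) + \ell_P(wu) + \langle 2\rho_P, u^{-1}(\lambda) \rangle = 0$ holds if and only if the pair $(x, u)$ is $P$-allowed. -/
/-!
Setting: a finite reduced crystallographic root system `R` with positive roots `Rpos`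
in a rational vector space `E`, a parabolic subset `RP = R_P`, elements `w, u` of the
Weyl group (linear automorphisms preserving `R`), and an integral coweight `lam`.
Membership `β ∈ R⁻` is encoded by `-β ∈ Rpos`.
-/

open Finset

/-- The pair `(x, u) = (w t_λ, u)` is `P`-allowed. -/
def PAllowedPair {E : Type*} [AddCommGroup E] [Module ℚ E]
    (Rpos RP : Finset E) (w u : E ≃ₗ[ℚ] E) (lam : E →ₗ[ℚ] ℚ) : Prop :=
  (∀ α ∈ Rpos, α ∉ RP →
    (((u α ∈ Rpos ∧ w (u α) ∈ Rpos) ∨ (-(u α) ∈ Rpos ∧ -(w (u α)) ∈ Rpos)) →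
        lam (u α) ≤ 0) ∧
    ((-(u α) ∈ Rpos ∧ w (u α) ∈ Rpos) → lam (u α) ≤ 1) ∧
    ((u α ∈ Rpos ∧ -(w (u α)) ∈ Rpos) → lam (u α) ≤ -1)) ∧
  (∀ α ∈ Rpos, (∃ β ∈ RP, u β = α) →
    (w α ∈ Rpos → lam α = 0) ∧ (-(w α) ∈ Rpos → lam α = -1))

/-- `φ α`: the positive root among `±u(α)`. -/
def auxPhi {E : Type*} [AddCommGroup E] [Module ℚ E] [DecidableEq E]
    (Rpos : Finset E) (u : E ≃ₗ[ℚ] E) (α : E) : E :=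
  if u α ∈ Rpos then u α else -(u α)

/-- Summand of `affLen`. -/
noncomputable def auxG {E : Type*} [AddCommGroup E] [Module ℚ E] [DecidableEq E]
    (Rpos : Finset E) (w : E ≃ₗ[ℚ] E) (lam : E →ₗ[ℚ] ℚ) (β : E) : ℚ :=
  |lam β + (if -(w β) ∈ Rpos then 1 else 0)|

/-- `c α = χ(u α < 0) - χ(w u α < 0)`. -/
noncomputable def auxC {E : Type*} [AddCommGroup E] [Module ℚ E] [DecidableEq E]
    (Rpos : Finset E) (w u : E ≃ₗ[ℚ] E) (α : E) : ℚ :=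
  (if -(u α) ∈ Rpos then 1 else 0) - (if -(w (u α)) ∈ Rpos then 1 else 0)

/-- The per-root term of the combined sum. -/
noncomputable def auxT {E : Type*} [AddCommGroup E] [Module ℚ E] [DecidableEq E]
    (Rpos RP : Finset E) (w u : E ≃ₗ[ℚ] E) (lam : E →ₗ[ℚ] ℚ) (α : E) : ℚ :=
  auxG Rpos w lam (auxPhi Rpos u α)
    - (if α ∉ RP ∧ -(u α) ∈ Rpos then 1 else 0)
    + (if α ∉ RP ∧ -(w (u α)) ∈ Rpos then 1 else 0)
    + (if α ∈ RP then 0 else lam (u α))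

lemma abs_add_self_nonneg' (s : ℚ) : 0 ≤ |s| + s := by
  have := neg_abs_le s; linarith

lemma abs_add_self_eq_zero_iff' (s : ℚ) : |s| + s = 0 ↔ s ≤ 0 := by
  constructor
  · intro h
    exact abs_eq_neg_self.mp (by linarith)
  · intro h; rw [abs_eq_neg_self.mpr h]; ring

/-- For `x = w t_λ ∈ 𝑊̃` and `u ∈ W`, the equality
`ℓ(x) - ℓ_P(u) + ℓ_P(wu) + ⟨2ρ_P, u⁻¹(λ)⟩ = 0` holds if and only if `(x, u)` is `P`-allowed. -/
theorem stmt1 {E : Type*} [AddCommGroup E] [Module ℚ E] [DecidableEq E]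
    (R Rpos RP : Finset E)
    (hspan : Submodule.span ℚ (R : Set E) = ⊤)
    (hsplit : ∀ α : E, α ∈ R ↔ (α ∈ Rpos ∨ -α ∈ Rpos))
    (hdisj : ∀ α ∈ Rpos, -α ∉ Rpos)
    (hRP : RP ⊆ R) (hRPneg : ∀ α ∈ RP, -α ∈ RP)
    (w u : E ≃ₗ[ℚ] E)
    (hw : ∀ α ∈ R, w α ∈ R) (hu : ∀ α ∈ R, u α ∈ R)
    (lam : E →ₗ[ℚ] ℚ)
    (hlam : ∀ α ∈ R, ∃ n : ℤ, lam α = (n : ℚ)) :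
    (affLen Rpos w lam - (lenP Rpos RP u : ℚ) + (lenP Rpos RP (u.trans w) : ℚ)
        + ∑ α ∈ Rpos \ RP, lam (u α) = 0)
      ↔ PAllowedPair Rpos RP w u lam := by
  classical
  have hmemR : ∀ α ∈ Rpos, α ∈ R := fun α h => (hsplit α).mpr (Or.inl h)
  have hneg : ∀ β ∈ R, β ∉ Rpos → -β ∈ Rpos := fun β hβ h =>
    ((hsplit β).mp hβ).resolve_left h
  -- u.symm preserves R
  have huR : Finset.image (fun a => u a) R = R := by
    apply Finset.eq_of_subset_of_card_le
    · intro β hβ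
      rw [Finset.mem_image] at hβ
      obtain ⟨a, ha, rfl⟩ := hβ
      exact hu a ha
    · rw [Finset.card_image_of_injective _ u.injective]
  have husymm : ∀ β ∈ R, u.symm β ∈ R := by
    intro β hβ
    rw [← huR, Finset.mem_image] at hβ
    obtain ⟨a, ha, h⟩ := hβ
    rw [← h, LinearEquiv.symm_apply_apply]; exact ha
  -- φ and its inverse map Rpos to Rpos
  have hφmem : ∀ α ∈ Rpos, auxPhi Rpos u α ∈ Rpos := by
    intro α hα
    unfold auxPhi
    by_cases h : u α ∈ Rpos
    · simp [h]
    · simp only [h, if_false]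
      exact hneg _ (hu α (hmemR α hα)) h
  set ψ : E → E := fun β => if u.symm β ∈ Rpos then u.symm β else -(u.symm β) with hψ
  have hψmem : ∀ β ∈ Rpos, ψ β ∈ Rpos := by
    intro β hβ
    by_cases h : u.symm β ∈ Rpos
    · simp [hψ, h]
    · simp only [hψ, h, if_false]
      exact hneg _ (husymm β (hmemR β hβ)) h
  have hψφ : ∀ α ∈ Rpos, ψ (auxPhi Rpos u α) = α := by
    intro α hα
    unfold auxPhi
    by_cases h : u α ∈ Rpos
    · simp [hψ, h, hα]
    · simp only [hψ, h, if_false, map_neg, LinearEquiv.symm_apply_apply]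
      simp [hdisj α hα]
  have hφψ : ∀ β ∈ Rpos, auxPhi Rpos u (ψ β) = β := by
    intro β hβ
    by_cases h : u.symm β ∈ Rpos
    · simp [hψ, h, auxPhi, LinearEquiv.apply_symm_apply, hβ]
    · simp only [hψ, h, if_false, auxPhi, map_neg, LinearEquiv.apply_symm_apply]
      simp [hdisj β hβ]
  -- Step 1 : affLen as a sum over α of g(φ α)
  have step1 : affLen Rpos w lam = ∑ α ∈ Rpos, auxG Rpos w lam (auxPhi Rpos u α) := by
    rw [affLen]
    exact Finset.sum_nbij' ψ (auxPhi Rpos u) hψmem hφmem hφψ hψφ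
      (fun β hβ => by rw [hφψ β hβ]; rfl)
  -- Step 2/3 : lenP as sums of indicators
  have hlen : ∀ v : E ≃ₗ[ℚ] E, (lenP Rpos RP v : ℚ)
      = ∑ α ∈ Rpos, (if α ∉ RP ∧ -(v α) ∈ Rpos then (1 : ℚ) else 0) := by
    intro v
    rw [lenP, Finset.card_filter, Finset.sdiff_eq_filter, Finset.sum_filter]
    push_cast
    exact Finset.sum_congr rfl fun α _ => by
      by_cases h1 : α ∉ RP <;> by_cases h2 : -(v α) ∈ Rpos <;> simp [h1, h2]
  have step4 : ∑ α ∈ Rpos \ RP, lam (u α)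
      = ∑ α ∈ Rpos, (if α ∈ RP then 0 else lam (u α)) := by
    rw [Finset.sdiff_eq_filter, Finset.sum_filter]
    exact Finset.sum_congr rfl fun α _ => by by_cases h : α ∈ RP <;> simp [h]
  have hsum : affLen Rpos w lam - (lenP Rpos RP u : ℚ) + (lenP Rpos RP (u.trans w) : ℚ)
      + ∑ α ∈ Rpos \ RP, lam (u α) = ∑ α ∈ Rpos, auxT Rpos RP w u lam α := by
    rw [step1, hlen u, hlen (u.trans w), step4, ← Finset.sum_sub_distrib,
      ← Finset.sum_add_distrib, ← Finset.sum_add_distrib]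
    exact Finset.sum_congr rfl fun α _ => by
      simp only [auxT, LinearEquiv.trans_apply]
      congr
  -- master computation of T α
  have key : ∀ α ∈ Rpos, auxT Rpos RP w u lam α =
      if α ∈ RP then |lam (u α) - auxC Rpos w u α|
      else |lam (u α) - auxC Rpos w u α| + (lam (u α) - auxC Rpos w u α) := by
    intro α hα
    have huα : u α ∈ R := hu α (hmemR α hα)
    have hwuα : w (u α) ∈ R := hw _ huα
    by_cases h1 : u α ∈ Rpos
    · have h1' : -(u α) ∉ Rpos := hdisj _ h1
      have hphi : auxPhi Rpos u α = u α := by unfold auxPhi; rw [if_pos h1]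
      by_cases h2 : w (u α) ∈ Rpos
      · -- (+,+) : c = 0
        have h2' : -(w (u α)) ∉ Rpos := hdisj _ h2
        have hC : auxC Rpos w u α = 0 := by
          unfold auxC; rw [if_neg h1', if_neg h2']; ring
        have hG : auxG Rpos w lam (auxPhi Rpos u α) = |lam (u α) - auxC Rpos w u α| := by
          rw [hphi, hC]; unfold auxG; rw [if_neg h2', add_zero, sub_zero]
        unfold auxT
        rw [hG, hC]
        by_cases hP : α ∈ RP <;> simp [hP, h1', h2'] <;> ring
      · -- (+,-) : c = -1
        have h2' : -(w (u α)) ∈ Rpos := hneg _ hwuα h2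
        have hC : auxC Rpos w u α = -1 := by
          unfold auxC; rw [if_neg h1', if_pos h2']; ring
        have hG : auxG Rpos w lam (auxPhi Rpos u α) = |lam (u α) - auxC Rpos w u α| := by
          rw [hphi, hC]; unfold auxG; rw [if_pos h2', sub_neg_eq_add]
        unfold auxT
        rw [hG, hC]
        by_cases hP : α ∈ RP <;> simp [hP, h1', h2'] <;> ring
    · have h1' : -(u α) ∈ Rpos := hneg _ huα h1
      have hphi : auxPhi Rpos u α = -(u α) := by unfold auxPhi; rw [if_neg h1]
      by_cases h2 : w (u α) ∈ Rpos
      · -- (-,+) : c = 1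
        have h2' : -(w (u α)) ∉ Rpos := hdisj _ h2
        have hC : auxC Rpos w u α = 1 := by
          unfold auxC; rw [if_pos h1', if_neg h2']; ring
        have hG : auxG Rpos w lam (auxPhi Rpos u α) = |lam (u α) - auxC Rpos w u α| := by
          rw [hphi, hC]; unfold auxG
          rw [map_neg, map_neg, neg_neg, if_pos h2,
            show -(lam (u α)) + 1 = -(lam (u α) - 1) by ring, abs_neg]
        unfold auxT
        rw [hG, hC]
        by_cases hP : α ∈ RP <;> simp [hP, h1', h2'] <;> ring
      · -- (-,-) : c = 0
        have h2' : -(w (u α)) ∈ Rpos := hneg _ hwuα h2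
        have hC : auxC Rpos w u α = 0 := by
          unfold auxC; rw [if_pos h1', if_pos h2']; ring
        have hG : auxG Rpos w lam (auxPhi Rpos u α) = |lam (u α) - auxC Rpos w u α| := by
          rw [hphi, hC]; unfold auxG
          rw [map_neg, map_neg, neg_neg, if_neg h2, add_zero, abs_neg, sub_zero]
        unfold auxT
        rw [hG, hC]
        by_cases hP : α ∈ RP <;> simp [hP, h1', h2'] <;> ring
  -- nonnegativity of each term
  have hnn : ∀ α ∈ Rpos, 0 ≤ auxT Rpos RP w u lam α := by
    intro α hα
    rw [key α hα]
    by_cases hP : α ∈ RP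
    · rw [if_pos hP]; exact abs_nonneg _
    · rw [if_neg hP]; exact abs_add_self_nonneg' _
  rw [hsum, Finset.sum_eq_zero_iff_of_nonneg hnn]
  constructor
  · -- forward: termwise vanishing implies P-allowed
    intro H
    constructor
    · intro α hα hP
      have h0 := H α hα
      rw [key α hα, if_neg hP, abs_add_self_eq_zero_iff', sub_nonpos] at h0
      refine ⟨?_, ?_, ?_⟩
      · rintro (⟨h1, h2⟩ | ⟨h1, h2⟩)
        · unfold auxC at h0
          rw [if_neg (hdisj _ h1), if_neg (hdisj _ h2)] at h0; linarith
        · unfold auxC at h0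
          rw [if_pos h1, if_pos h2] at h0; linarith
      · rintro ⟨h1, h2⟩
        unfold auxC at h0
        rw [if_pos h1, if_neg (hdisj _ h2)] at h0; linarith
      · rintro ⟨h1, h2⟩
        unfold auxC at h0
        rw [if_neg (hdisj _ h1), if_pos h2] at h0; linarith
    · intro α hα hex
      obtain ⟨β, hβP, hβα⟩ := hex
      have hβR : β ∈ R := hRP hβP
      by_cases h : β ∈ Rpos
      · have h0 := H β h
        rw [key β h, if_pos hβP, abs_eq_zero, sub_eq_zero] at h0
        unfold auxC at h0
        rw [hβα] at h0
        refine ⟨fun hwα => ?_, fun hwα => ?_⟩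
        · rw [if_neg (hdisj α hα), if_neg (hdisj _ hwα)] at h0; linarith
        · rw [if_neg (hdisj α hα), if_pos hwα] at h0; linarith
      · have hγpos : -β ∈ Rpos := hneg _ hβR h
        have h0 := H (-β) hγpos
        rw [key (-β) hγpos, if_pos (hRPneg _ hβP), abs_eq_zero, sub_eq_zero] at h0
        unfold auxC at h0
        rw [map_neg, hβα] at h0
        simp only [map_neg, neg_neg, if_pos hα] at h0
        refine ⟨fun hwα => ?_, fun hwα => ?_⟩
        · rw [if_pos hwα] at h0; linarith
        · rw [if_neg (fun hc => hdisj _ hc hwα)] at h0; linarith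
  · -- backward: P-allowed implies termwise vanishing
    rintro ⟨H1, H2⟩ α hα
    rw [key α hα]
    have huα : u α ∈ R := hu α (hmemR α hα)
    have hwuα : w (u α) ∈ R := hw _ huα
    by_cases hP : α ∈ RP
    · rw [if_pos hP, abs_eq_zero, sub_eq_zero]
      have hβ : ∃ β ∈ RP, u β = auxPhi Rpos u α := by
        by_cases h1 : u α ∈ Rpos
        · refine ⟨α, hP, ?_⟩; unfold auxPhi; rw [if_pos h1]
        · refine ⟨-α, hRPneg α hP, ?_⟩; rw [map_neg]; unfold auxPhi; rw [if_neg h1]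
      have h2 := H2 _ (hφmem α hα) hβ
      by_cases h1 : u α ∈ Rpos
      · have hphi : auxPhi Rpos u α = u α := by unfold auxPhi; rw [if_pos h1]
        rw [hphi] at h2
        unfold auxC; rw [if_neg (hdisj _ h1)]
        by_cases hs : w (u α) ∈ Rpos
        · rw [if_neg (hdisj _ hs), h2.1 hs]; ring
        · have hns : -(w (u α)) ∈ Rpos := hneg _ hwuα hs
          rw [if_pos hns, h2.2 hns]; ring
      · have hphi : auxPhi Rpos u α = -(u α) := by unfold auxPhi; rw [if_neg h1]
        rw [hphi] at h2
        simp only [map_neg, neg_neg] at h2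
        unfold auxC; rw [if_pos (hneg _ huα h1)]
        by_cases hs : w (u α) ∈ Rpos
        · rw [if_neg (hdisj _ hs)]
          have := h2.2 hs; linarith
        · have hns : -(w (u α)) ∈ Rpos := hneg _ hwuα hs
          rw [if_pos hns]
          have := h2.1 hns; linarith
    · rw [if_neg hP, abs_add_self_eq_zero_iff', sub_nonpos]
      have h1' := H1 α hα hP
      by_cases h1 : u α ∈ Rpos
      · by_cases hs : w (u α) ∈ Rpos
        · unfold auxC; rw [if_neg (hdisj _ h1), if_neg (hdisj _ hs)]
          have := h1'.1 (Or.inl ⟨h1, hs⟩); linarith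
        · have hns : -(w (u α)) ∈ Rpos := hneg _ hwuα hs
          unfold auxC; rw [if_neg (hdisj _ h1), if_pos hns]
          have := h1'.2.2 ⟨h1, hns⟩; linarith
      · have hn1 : -(u α) ∈ Rpos := hneg _ huα h1
        by_cases hs : w (u α) ∈ Rpos
        · unfold auxC; rw [if_pos hn1, if_neg (hdisj _ hs)]
          have := h1'.2.1 ⟨hn1, hs⟩; linarith
        · have hns : -(w (u α)) ∈ Rpos := hneg _ hwuα hs
          unfold auxC; rw [if_pos hn1, if_pos hns]
          have := h1'.1 (Or.inr ⟨hn1, hns⟩); linarith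
end

section
/- Let $x = w t_\lambda \in \widetilde{W}$ and $u \in W$. For each $\alpha \in R^+$ let $\alpha'$ denote the unique positive root among $\{u(\alpha), -u(\alpha)\}$, and define $g(\alpha) = |\langle u(\alpha), \lambda \rangle| + \chi(\alpha \notin R_P^+)\,\langle u(\alpha), \lambda \rangle + \chi(w(\alpha') \in R^- \text{ and } \langle \alpha', \lambda \rangle \ge 0) - \chi(w(\alpha') \in R^- \text{ and } \langle \alpha', \lambda \rangle < 0) - \chi(\alpha \in R^+ \setminus R_P^+ \text{ and } u(\alpha) \in R^-) + \chi(\alpha \in R^+ \setminus R_P^+ \text{ and } wu(\alpha) \in R^-)$. Then $\ell(x) - \ell_P(u) + \ell_P(wu) + \langle 2\rho_P, u^{-1}(\lambda) \rangle = \sum_{\alpha \in R^+} g(\alpha)$, and $g(\alpha) \ge 0$ for every $\alpha \in R^+$. -/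
/-!
Setting: a finite reduced crystallographic root system `R` with positive roots `Rpos`
in a rational vector space `E`, a parabolic subset `RP = R_P`, elements `w, u` of the
Weyl group (linear automorphisms preserving `R`), and an integral coweight `lam`.
Membership `β ∈ R⁻` is encoded by `-β ∈ Rpos`.
-/

open Finset

/-- The summand `g(α)` associated with `x = w t_λ` and `u`.  Here `α'` is the unique
positive root among `{u(α), -u(α)}`, and each indicator `χ(⋯)` is an `if ⋯ then 1 else 0`. -/
noncomputable def gfun {E : Type*} [AddCommGroup E] [Module ℚ E] [DecidableEq E]
    (Rpos RP : Finset E) (w u : E ≃ₗ[ℚ] E) (lam : E →ₗ[ℚ] ℚ) (α : E) : ℚ :=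
  let β := u α
  let α' := if β ∈ Rpos then β else -β
  |lam β| + (if α ∉ RP then 1 else 0) * lam β
    + (if -(w α') ∈ Rpos ∧ 0 ≤ lam α' then 1 else 0)
    - (if -(w α') ∈ Rpos ∧ lam α' < 0 then 1 else 0)
    - (if α ∉ RP ∧ -β ∈ Rpos then 1 else 0)
    + (if α ∉ RP ∧ -(w β) ∈ Rpos then 1 else 0)

/-- An integer-valued rational which is negative is at most `-1`. -/
lemma int_le_neg_one (q : ℚ) (h : ∃ n : ℤ, q = (n : ℚ)) (hq : q < 0) : q ≤ -1 := by
  obtain ⟨n, rfl⟩ := h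
  have : n < 0 := by exact_mod_cast hq
  have : n ≤ -1 := by omega
  exact_mod_cast this

/-- An integer-valued rational which is positive is at least `1`. -/
lemma int_ge_one (q : ℚ) (h : ∃ n : ℤ, q = (n : ℚ)) (hq : 0 < q) : 1 ≤ q := by
  obtain ⟨n, rfl⟩ := h
  have : 0 < n := by exact_mod_cast hq
  have : 1 ≤ n := by omega
  exact_mod_cast this

/-- Decomposition of `|q + χ(b)|` for integer-valued `q`. -/
lemma abs_int_aux (q : ℚ) (h : ∃ n : ℤ, q = (n : ℚ)) (b : Prop) [Decidable b] :
    |q + (if b then 1 else 0)| =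
      |q| + (if b ∧ 0 ≤ q then 1 else 0) - (if b ∧ q < 0 then 1 else 0) := by
  by_cases hb : b
  · rcases le_or_gt 0 q with hq | hq
    · rw [if_pos hb, if_pos ⟨hb, hq⟩, if_neg (fun hc => absurd hc.2 (not_lt.2 hq)),
        abs_of_nonneg hq, abs_of_nonneg (by linarith)]
      ring
    · have h1 : q ≤ -1 := int_le_neg_one q h hq
      rw [if_pos hb, if_neg (fun hc => absurd hc.2 (not_le.2 hq)), if_pos ⟨hb, hq⟩,
        abs_of_neg hq, abs_of_nonpos (by linarith)]
      ring
  · simp [hb]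

/-- For `x = w t_λ ∈ 𝑊̃` and `u ∈ W`, one has
`ℓ(x) - ℓ_P(u) + ℓ_P(wu) + ⟨2ρ_P, u⁻¹(λ)⟩ = ∑_{α ∈ R⁺} g(α)`, and `g(α) ≥ 0` for
every `α ∈ R⁺`. -/
theorem stmt2 {E : Type*} [AddCommGroup E] [Module ℚ E] [DecidableEq E]
    (R Rpos RP : Finset E)
    (hspan : Submodule.span ℚ (R : Set E) = ⊤)
    (hsplit : ∀ α : E, α ∈ R ↔ (α ∈ Rpos ∨ -α ∈ Rpos))
    (hdisj : ∀ α ∈ Rpos, -α ∉ Rpos)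
    (hRP : RP ⊆ R) (hRPneg : ∀ α ∈ RP, -α ∈ RP)
    (w u : E ≃ₗ[ℚ] E)
    (hw : ∀ α ∈ R, w α ∈ R) (hu : ∀ α ∈ R, u α ∈ R)
    (lam : E →ₗ[ℚ] ℚ)
    (hlam : ∀ α ∈ R, ∃ n : ℤ, lam α = (n : ℚ)) :
    (affLen Rpos w lam - (lenP Rpos RP u : ℚ) + (lenP Rpos RP (u.trans w) : ℚ)
        + ∑ α ∈ Rpos \ RP, lam (u α)
      = ∑ α ∈ Rpos, gfun Rpos RP w u lam α) ∧
    (∀ α ∈ Rpos, 0 ≤ gfun Rpos RP w u lam α) := by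
  classical
  have hRposR : ∀ α ∈ Rpos, α ∈ R := fun α h => (hsplit α).2 (Or.inl h)
  have hnegR : ∀ α ∈ R, -α ∈ R := fun α h =>
    (hsplit (-α)).2 (by rw [neg_neg]; exact ((hsplit α).1 h).symm)
  -- u maps R onto R, so its inverse preserves R
  have himg : R.image (fun a => u a) = R := by
    apply Finset.eq_of_subset_of_card_le
    · intro x hx
      obtain ⟨a, ha, rfl⟩ := Finset.mem_image.1 hx
      exact hu a ha
    · rw [Finset.card_image_of_injective _ u.injective]
  have husymm : ∀ α ∈ R, u.symm α ∈ R := by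
    intro α hα
    rw [← himg] at hα
    obtain ⟨a, ha, rfl⟩ := Finset.mem_image.1 hα
    simpa using ha
  -- the sign-normalization maps
  set σ : E → E := fun γ => if u γ ∈ Rpos then u γ else -(u γ) with hσdef
  set τ : E → E := fun γ => if u.symm γ ∈ Rpos then u.symm γ else -(u.symm γ) with hτdef
  have hσmem : ∀ γ ∈ Rpos, σ γ ∈ Rpos := by
    intro γ hγ
    have huγ : u γ ∈ R := hu γ (hRposR γ hγ)
    rcases (hsplit (u γ)).1 huγ with h | h
    · simpa [hσdef, h] using h
    · have : u γ ∉ Rpos := fun hc => hdisj _ hc (by simpa using h)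
      simpa [hσdef, this] using h
  have hτmem : ∀ γ ∈ Rpos, τ γ ∈ Rpos := by
    intro γ hγ
    have huγ : u.symm γ ∈ R := husymm γ (hRposR γ hγ)
    rcases (hsplit (u.symm γ)).1 huγ with h | h
    · simpa [hτdef, h] using h
    · have : u.symm γ ∉ Rpos := fun hc => hdisj _ hc (by simpa using h)
      simpa [hτdef, this] using h
  have hτσ : ∀ γ ∈ Rpos, τ (σ γ) = γ := by
    intro γ hγ
    by_cases h : u γ ∈ Rpos
    · simp [hσdef, hτdef, h, hγ]
    · have h2 : -γ ∉ Rpos := hdisj γ hγ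
      simp [hσdef, hτdef, h, h2]
  have hστ : ∀ γ ∈ Rpos, σ (τ γ) = γ := by
    intro γ hγ
    by_cases h : u.symm γ ∈ Rpos
    · simp [hσdef, hτdef, h, hγ]
    · have h2 : -γ ∉ Rpos := hdisj γ hγ
      simp [hσdef, hτdef, h, h2]
  -- nonnegativity of g
  have hnonneg : ∀ α ∈ Rpos, 0 ≤ gfun Rpos RP w u lam α := by
    intro α hα
    have hαR : α ∈ R := hRposR α hα
    have huαR : u α ∈ R := hu α hαR
    have hint : ∃ n : ℤ, lam (u α) = (n : ℚ) := hlam _ huαR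
    have hwuR : w (u α) ∈ R := hw _ huαR
    have hwsplit : w (u α) ∈ Rpos ∨ -(w (u α)) ∈ Rpos := (hsplit _).1 hwuR
    by_cases hβ : u α ∈ Rpos
    · -- α' = u α
      have hC : -(u α) ∉ Rpos := hdisj _ hβ
      simp only [gfun, if_pos hβ]
      rcases lt_trichotomy (lam (u α)) 0 with hq | hq | hq
      · have h1 : lam (u α) ≤ -1 := int_le_neg_one _ hint hq
        rw [abs_of_neg hq]
        by_cases hRPα : α ∈ RP
        · simp only [hRPα, not_true_eq_false, false_and, if_false, if_neg (fun hc : (-(w (u α)) ∈ Rpos ∧ 0 ≤ lam (u α)) => absurd hc.2 (not_le.2 hq))]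
          split_ifs <;> linarith
        · simp only [hRPα, not_false_eq_true, true_and, if_true,
            if_neg (fun hc : (-(w (u α)) ∈ Rpos ∧ 0 ≤ lam (u α)) => absurd hc.2 (not_le.2 hq)),
            if_neg (fun hc : (-(u α) ∈ Rpos) => absurd hc hC)]
          by_cases hP : -(w (u α)) ∈ Rpos
          · rw [if_pos ⟨hP, hq⟩, if_pos hP]; ring_nf; linarith
          · rw [if_neg (fun hc => absurd hc.1 hP), if_neg hP]; linarith
      · rw [hq]
        simp only [abs_zero, mul_zero, lt_irrefl, and_false, if_false]
        have hC' : ¬(α ∉ RP ∧ -(u α) ∈ Rpos) := fun hc => hC hc.2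
        rw [if_neg hC']
        split_ifs <;> norm_num
      · have h1 : (1:ℚ) ≤ lam (u α) := int_ge_one _ hint hq
        rw [abs_of_pos hq]
        have hB : ¬(-(w (u α)) ∈ Rpos ∧ lam (u α) < 0) := fun hc => absurd hc.2 (not_lt.2 hq.le)
        have hC' : ¬(α ∉ RP ∧ -(u α) ∈ Rpos) := fun hc => hC hc.2
        rw [if_neg hB, if_neg hC']
        split_ifs <;> linarith
    · -- α' = -(u α)
      have hmβ : -(u α) ∈ Rpos := by
        rcases (hsplit (u α)).1 huαR with h | h
        · exact absurd h hβ
        · exact h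
      simp only [gfun, if_neg hβ, map_neg, neg_neg, LinearMap.map_neg]
      -- now conditions involve `w (u α) ∈ Rpos` and `-lam (u α)`
      have hdisj2 : ¬(w (u α) ∈ Rpos ∧ -(w (u α)) ∈ Rpos) := fun hc => hdisj _ hc.1 hc.2
      rcases lt_trichotomy (lam (u α)) 0 with hq | hq | hq
      · have h1 : lam (u α) ≤ -1 := int_le_neg_one _ hint hq
        rw [abs_of_neg hq]
        have hB : ¬(w (u α) ∈ Rpos ∧ -lam (u α) < 0) := fun hc => absurd hc.2 (by simpa using hq.le)
        rw [if_neg hB]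
        by_cases hRPα : α ∈ RP
        · simp only [hRPα, not_true_eq_false, false_and, if_false]
          split_ifs <;> linarith
        · simp only [hRPα, not_false_eq_true, true_and, if_true, if_pos hmβ]
          have hA : 0 ≤ -lam (u α) := by linarith
          rcases hwsplit with h | h
          · rw [if_pos ⟨h, hA⟩]
            split_ifs <;> linarith
          · rw [if_pos h]
            split_ifs <;> linarith
      · rw [hq]
        simp only [abs_zero, mul_zero, neg_zero, lt_irrefl, and_false, if_false]
        by_cases hRPα : α ∈ RP
        · simp only [hRPα, not_true_eq_false, false_and, if_false]
          split_ifs <;> norm_num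
        · simp only [hRPα, not_false_eq_true, true_and, if_true, if_pos hmβ]
          rcases hwsplit with h | h
          · rw [if_pos ⟨h, le_refl _⟩]
            split_ifs <;> norm_num
          · rw [if_pos h]
            split_ifs <;> norm_num
      · have h1 : (1:ℚ) ≤ lam (u α) := int_ge_one _ hint hq
        rw [abs_of_pos hq]
        have hA : ¬(w (u α) ∈ Rpos ∧ 0 ≤ -lam (u α)) := fun hc => absurd hc.2 (by simp; linarith)
        rw [if_neg hA]
        by_cases hRPα : α ∈ RP
        · simp only [hRPα, not_true_eq_false, false_and, if_false]
          split_ifs <;> linarith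
        · simp only [hRPα, not_false_eq_true, true_and, if_true, if_pos hmβ]
          split_ifs <;> linarith
  refine ⟨?_, hnonneg⟩
  -- pointwise decomposition of g
  have hg : ∀ α ∈ Rpos, gfun Rpos RP w u lam α =
      |lam (σ α) + (if -(w (σ α)) ∈ Rpos then 1 else 0)|
      + (if α ∉ RP then 1 else 0) * lam (u α)
      - (if α ∉ RP ∧ -(u α) ∈ Rpos then 1 else 0)
      + (if α ∉ RP ∧ -(w (u α)) ∈ Rpos then 1 else 0) := by
    intro α hα
    have hσα : σ α ∈ Rpos := hσmem α hα
    have hσR : σ α ∈ R := hRposR _ hσα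
    have hint : ∃ n : ℤ, lam (σ α) = (n : ℚ) := hlam _ hσR
    rw [abs_int_aux _ hint]
    have habs : |lam (σ α)| = |lam (u α)| := by
      by_cases h : u α ∈ Rpos
      · simp [hσdef, h]
      · simp [hσdef, h, abs_neg]
    simp only [gfun, hσdef]
    rw [← habs]
    ring
  rw [Finset.sum_congr rfl hg]
  -- split the sum
  rw [show (fun α => |lam (σ α) + (if -(w (σ α)) ∈ Rpos then 1 else 0)|
      + (if α ∉ RP then 1 else 0) * lam (u α)
      - (if α ∉ RP ∧ -(u α) ∈ Rpos then 1 else 0)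
      + (if α ∉ RP ∧ -(w (u α)) ∈ Rpos then 1 else 0)) = fun α =>
      (|lam (σ α) + (if -(w (σ α)) ∈ Rpos then 1 else 0)|
      + (if α ∉ RP then 1 else 0) * lam (u α)
      - (if α ∉ RP ∧ -(u α) ∈ Rpos then 1 else 0)
      + (if α ∉ RP ∧ -(w (u α)) ∈ Rpos then 1 else 0)) from rfl]
  rw [Finset.sum_add_distrib, Finset.sum_sub_distrib, Finset.sum_add_distrib]
  have e1 : ∑ α ∈ Rpos, |lam (σ α) + (if -(w (σ α)) ∈ Rpos then 1 else 0)|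
      = affLen Rpos w lam := by
    unfold affLen
    exact Finset.sum_nbij' σ τ hσmem hτmem hτσ hστ (fun a _ => rfl)
  have e2 : ∑ α ∈ Rpos, (if α ∉ RP then 1 else 0) * lam (u α)
      = ∑ α ∈ Rpos \ RP, lam (u α) := by
    rw [← Finset.sum_subset (Finset.sdiff_subset : Rpos \ RP ⊆ Rpos)]
    · apply Finset.sum_congr rfl
      intro α hα
      have : α ∉ RP := (Finset.mem_sdiff.1 hα).2
      simp [this]
    · intro α hα hα2
      have : α ∈ RP := by
        by_contra hc
        exact hα2 (Finset.mem_sdiff.2 ⟨hα, hc⟩)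
      simp [this]
  have e3 : ∑ α ∈ Rpos, (if α ∉ RP ∧ -(u α) ∈ Rpos then (1:ℚ) else 0)
      = (lenP Rpos RP u : ℚ) := by
    unfold lenP
    rw [← Finset.sum_boole]
    rw [← Finset.sum_subset (Finset.sdiff_subset : Rpos \ RP ⊆ Rpos)]
    · apply Finset.sum_congr rfl
      intro α hα
      have : α ∉ RP := (Finset.mem_sdiff.1 hα).2
      simp [this]
    · intro α hα hα2
      have : α ∈ RP := by
        by_contra hc
        exact hα2 (Finset.mem_sdiff.2 ⟨hα, hc⟩)
      simp [this]
  have e4 : ∑ α ∈ Rpos, (if α ∉ RP ∧ -(w (u α)) ∈ Rpos then (1:ℚ) else 0)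
      = (lenP Rpos RP (u.trans w) : ℚ) := by
    unfold lenP
    rw [← Finset.sum_boole]
    rw [← Finset.sum_subset (Finset.sdiff_subset : Rpos \ RP ⊆ Rpos)]
    · apply Finset.sum_congr rfl
      intro α hα
      have : α ∉ RP := (Finset.mem_sdiff.1 hα).2
      simp [this, LinearEquiv.trans_apply]
      exact if_congr Iff.rfl rfl rfl
    · intro α hα hα2
      have : α ∈ RP := by
        by_contra hc
        exact hα2 (Finset.mem_sdiff.2 ⟨hα, hc⟩)
      simp [this]
  rw [e1, e2, e3, e4]
  ring
end

section
/- Let $v, w \in W$ with $w(R_P) = R_P$, and let $\lambda \in \Lambda$. Then $\sum_{\alpha \in R^+ \setminus R_P^+} \langle v(\alpha), \lambda \rangle \equiv \sum_{\alpha \in R^+ \setminus R_P^+} \langle v w^{-1}(\alpha), \lambda \rangle \pmod{2}$. (In particular, writing $d_{u,\lambda} = \langle u(2\rho_P), \lambda \rangle$ with $2\rho_P = \sum_{\alpha \in R^+ \setminus R_P^+} \alpha$, one has $d_{v,\lambda} \equiv d_{vw^{-1},\lambda} \pmod 2$ for every element $w$ of the normalizer of $W_P$ in $W$.) -/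
/-!
Setting: a finite reduced crystallographic root system `R` with positive roots `Rpos`
in a rational vector space `E`, a parabolic subset `RP = R_P`, elements `v, w` of the
Weyl group (linear automorphisms preserving `R`) with `w(R_P) = R_P`, and an integral
coweight `lam`.  The conclusion is the congruence
`∑_{α ∈ R⁺ \ R_P⁺} ⟨v(α), λ⟩ ≡ ∑_{α ∈ R⁺ \ R_P⁺} ⟨v w⁻¹(α), λ⟩ (mod 2)`,
i.e. `d_{v,λ} ≡ d_{v w⁻¹, λ} (mod 2)` where `d_{u,λ} = ⟨u(2ρ_P), λ⟩`.
-/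

open Finset

private lemma int_sum {E : Type*} [DecidableEq E] (s : Finset E) (f : E → ℚ)
    (h : ∀ x ∈ s, ∃ n : ℤ, f x = (n : ℚ)) :
    ∃ n : ℤ, ∑ x ∈ s, f x = (n : ℚ) := by
  classical
  induction s using Finset.induction with
  | empty => exact ⟨0, by simp⟩
  | @insert a s hx ih =>
    obtain ⟨n, hn⟩ := h a (Finset.mem_insert_self a s)
    obtain ⟨m, hm⟩ := ih (fun x hxs => h x (Finset.mem_insert_of_mem hxs))
    exact ⟨n + m, by rw [Finset.sum_insert hx, hn, hm]; push_cast; ring⟩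

theorem stmt4 {E : Type*} [AddCommGroup E] [Module ℚ E] [DecidableEq E]
    (R Rpos RP : Finset E)
    (hspan : Submodule.span ℚ (R : Set E) = ⊤)
    (hsplit : ∀ α : E, α ∈ R ↔ (α ∈ Rpos ∨ -α ∈ Rpos))
    (hdisj : ∀ α ∈ Rpos, -α ∉ Rpos)
    (hRP : RP ⊆ R) (hRPneg : ∀ α ∈ RP, -α ∈ RP)
    (v w : E ≃ₗ[ℚ] E)
    (hv : ∀ α ∈ R, v α ∈ R) (hw : ∀ α ∈ R, w α ∈ R)
    (hwRP : ∀ α : E, α ∈ RP ↔ w α ∈ RP)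
    (lam : E →ₗ[ℚ] ℚ)
    (hlam : ∀ α ∈ R, ∃ n : ℤ, lam α = (n : ℚ)) :
    ∃ m : ℤ,
      (∑ α ∈ Rpos \ RP, lam (v α)) - (∑ α ∈ Rpos \ RP, lam (v (w.symm α)))
        = 2 * (m : ℚ) := by
  classical
  -- w restricts to a bijection of R
  have hwimg : R.image w = R := by
    apply Finset.eq_of_subset_of_card_le
    · intro x hx
      obtain ⟨a, ha, rfl⟩ := Finset.mem_image.mp hx
      exact hw a ha
    · rw [Finset.card_image_of_injective _ w.injective]
  have hwsymm : ∀ α ∈ R, w.symm α ∈ R := by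
    intro α hα
    rw [← hwimg] at hα
    obtain ⟨a, ha, rfl⟩ := Finset.mem_image.mp hα
    simpa using ha
  set T : Finset E := Rpos \ RP with hT
  set S : Finset E := T.image w.symm with hSdef
  have hmemS : ∀ β, β ∈ S ↔ w β ∈ T := by
    intro β
    simp only [hSdef, Finset.mem_image]
    constructor
    · rintro ⟨a, ha, rfl⟩; simpa using ha
    · intro h; exact ⟨w β, h, by simp⟩
  -- rewrite second sum as a sum over S
  have hsum2 : (∑ α ∈ T, lam (v (w.symm α))) = ∑ β ∈ S, lam (v β) := by
    rw [hSdef, Finset.sum_image (fun a _ b _ h => w.symm.injective h)]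
  -- the symmetric differences are related by negation
  have hneg : S \ T = (T \ S).image (fun x => -x) := by
    ext β
    simp only [Finset.mem_sdiff, Finset.mem_image, hmemS]
    constructor
    · rintro ⟨hwβT, hβT⟩
      refine ⟨-β, ⟨?_, ?_⟩, by simp⟩
      · -- -β ∈ T
        have hwβR : w β ∈ R := (hsplit _).mpr (Or.inl (Finset.mem_sdiff.mp hwβT).1)
        have hβR : β ∈ R := by
          have := hwsymm _ hwβR; simpa using this
        have hβnRP : β ∉ RP := fun h => (Finset.mem_sdiff.mp hwβT).2 ((hwRP β).mp h)
        have hβnpos : β ∉ Rpos := fun h => hβT (Finset.mem_sdiff.mpr ⟨h, hβnRP⟩)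
        have hnegpos : -β ∈ Rpos := ((hsplit β).mp hβR).resolve_left hβnpos
        have hnegnRP : -β ∉ RP := fun h => hβnRP (by simpa using hRPneg _ h)
        exact Finset.mem_sdiff.mpr ⟨hnegpos, hnegnRP⟩
      · -- w (-β) ∉ T
        intro h
        have : -(w β) ∈ Rpos := by
          have := (Finset.mem_sdiff.mp h).1
          simpa using this
        exact hdisj _ (Finset.mem_sdiff.mp hwβT).1 this
    · rintro ⟨a, ⟨haT, hwaT⟩, rfl⟩
      constructor
      · -- w (-a) ∈ T
        have haR : a ∈ R := (hsplit a).mpr (Or.inl (Finset.mem_sdiff.mp haT).1)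
        have hwaR : w a ∈ R := hw a haR
        have hwanRP : w a ∉ RP := fun h => (Finset.mem_sdiff.mp haT).2 ((hwRP a).mpr h)
        have hwanpos : w a ∉ Rpos := fun h =>
          hwaT (Finset.mem_sdiff.mpr ⟨h, hwanRP⟩)
        have : -(w a) ∈ Rpos := ((hsplit (w a)).mp hwaR).resolve_left hwanpos
        refine Finset.mem_sdiff.mpr ⟨by simpa using this, ?_⟩
        intro h
        exact hwanRP (by simpa using hRPneg _ h)
      · -- -a ∉ T
        intro h
        exact hdisj _ (Finset.mem_sdiff.mp haT).1 (Finset.mem_sdiff.mp h).1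
  have hsumneg : (∑ β ∈ S \ T, lam (v β)) = -∑ β ∈ T \ S, lam (v β) := by
    rw [hneg, Finset.sum_image (fun a _ b _ h => by simpa using h)]
    rw [← Finset.sum_neg_distrib]
    exact Finset.sum_congr rfl (fun x _ => by simp)
  obtain ⟨m, hm⟩ := int_sum (T \ S) (fun β => lam (v β)) (by
    intro β hβ
    have hβR : β ∈ R := (hsplit β).mpr
      (Or.inl (Finset.mem_sdiff.mp (Finset.mem_sdiff.mp hβ).1).1)
    exact hlam _ (hv _ hβR))
  refine ⟨m, ?_⟩
  rw [hsum2, ← Finset.sum_sdiff_sub_sum_sdiff, hsumneg, hm]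
  ring
end
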